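/- For every m ≥ 1 and every p ≥ 1, the p-th return word of the envelope word E_{1,m} in the period-doubling sequence D satisfies: r_p(E_{1,m}) = A_m if Θ_1[p] = a, and r_p(E_{1,m}) = A_{m−1} if Θ_1[p] = b. In other words, the return word sequence {r_p(E_{1,m})}_{p≥1} is the sequence Θ_1 over the alphabet {A_m, A_{m−1}}. -/

import Mathlib

/-- The alphabet: letters a, b (for the period-doubling sequence) and c (used by Θ₂). -/
inductive Letter : Type
  | a | b | c
deriving DecidableEq, Repr

open Letter

/-- The period-doubling substitution σ : a ↦ ab, b ↦ aa, extended to words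
(the extra letter c is left untouched; it is never produced). -/
def sigmaw : List Letter → List Letter :=
  fun w => w.flatMap fun x => match x with
    | .a => [.a, .b]
    | .b => [.a, .a]
    | .c => [.c]

/-- A_m = σ^m(a). -/
def A (m : ℕ) : List Letter := sigmaw^[m] [.a]

/-- B_m = σ^m(b). -/
def B (m : ℕ) : List Letter := sigmaw^[m] [.b]

/-- δ_m, the last letter of A_m. -/
def delta (m : ℕ) : Letter := (A m).getLastD .a

/-- The period-doubling sequence D, as a function giving its (n+1)-st letter
(0-indexed); it is the fixed point of σ beginning with a, and A_{n+1} is a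
prefix of it of length 2^{n+1} > n. -/
def D (n : ℕ) : Letter := (A (n + 1)).getD n .a

/-- The finite segment D[i .. i+len−1] of the period-doubling sequence,
with 1-based starting position i. -/
def Dseg (i len : ℕ) : List Letter := (List.range len).map fun k => D (i - 1 + k)

/-- u occurs in the finite word w at (1-based) position i. -/
def OccursAt {α : Type*} (u w : List α) (i : ℕ) : Prop :=
  1 ≤ i ∧ i - 1 + u.length ≤ w.length ∧ (w.drop (i - 1)).take u.length = u

/-- u is a factor of the finite word w. -/
def IsFactor {α : Type*} (u w : List α) : Prop := ∃ i, OccursAt u w i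

/-- u occurs in the period-doubling sequence D at (1-based) position i. -/
def DOccursAt (u : List Letter) (i : ℕ) : Prop := 1 ≤ i ∧ Dseg i u.length = u

/-- u is a factor of the period-doubling sequence D. -/
def FactorD (u : List Letter) : Prop := ∃ i, DOccursAt u i

/-- L(u,p): the starting position of the p-th occurrence (p ≥ 1) of u in D. -/
noncomputable def L (u : List Letter) (p : ℕ) : ℕ := Nat.nth (DOccursAt u) (p - 1)

/-- r_p(u): the p-th return word of u (p ≥ 1), i.e. D[L(u,p) .. L(u,p+1)−1];
r_0(u) is the prefix of D preceding the first occurrence of u. -/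
noncomputable def r (u : List Letter) (p : ℕ) : List Letter :=
  if p = 0 then Dseg 1 (L u 1 - 1) else Dseg (L u p) (L u (p + 1) - L u p)

/-- The morphism τ₁ : a ↦ a, b ↦ bb, extended to words. -/
def tau1 : List Letter → List Letter :=
  fun w => w.flatMap fun x => match x with
    | .a => [.a]
    | .b => [.b, .b]
    | .c => [.c]

/-- The morphism τ₂ : a ↦ ab, b ↦ acac, extended to words. -/
def tau2 : List Letter → List Letter :=
  fun w => w.flatMap fun x => match x with
    | .a => [.a, .b]
    | .b => [.a, .c, .a, .c]
    | .c => [.c]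

/-- Θ₁[p], the p-th letter (p ≥ 1) of Θ₁ = τ₁(D): since |τ₁(w)| ≥ |w|, the p-th
letter of Θ₁ is the p-th letter of the image of the length-p prefix of D. -/
def Theta1 (p : ℕ) : Letter := (tau1 (Dseg 1 p)).getD (p - 1) .a

/-- Θ₂[p], the p-th letter (p ≥ 1) of Θ₂ = τ₂(D). -/
def Theta2 (p : ℕ) : Letter := (tau2 (Dseg 1 p)).getD (p - 1) .a

/-- The envelope word E_{1,m} = A_m with its last letter δ_m deleted. -/
def E1 (m : ℕ) : List Letter := (A m).dropLast

/-- The envelope word E_{2,m} = B_m B_{m−1} with its last letter δ_m deleted. -/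
def E2 (m : ℕ) : List Letter := (B m ++ B (m - 1)).dropLast

/-- Enumeration of the envelope words in the order
E_{1,1} ⊏ E_{2,1} ⊏ E_{1,2} ⊏ E_{2,2} ⊏ …. -/
def Eword (k : ℕ) : List Letter := if k % 2 = 0 then E1 (k / 2 + 1) else E2 (k / 2 + 1)

/-- Env(u): the ⊏-least envelope word having u as a factor. -/
noncomputable def Env (u : List Letter) : List Letter :=
  Eword (sInf {k | IsFactor u (Eword k)})

/-- The letterwise complement exchanging a and b. -/
def comp : Letter → Letter
  | .a => .b
  | .b => .a
  | .c => .c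

lemma sigmaw_append (u v : List Letter) : sigmaw (u ++ v) = sigmaw u ++ sigmaw v :=
  List.flatMap_append

lemma sigit_append (m : ℕ) (u v : List Letter) :
    sigmaw^[m] (u ++ v) = sigmaw^[m] u ++ sigmaw^[m] v := by
  induction m generalizing u v with
  | zero => simp
  | succ m ih => simp [Function.iterate_succ_apply, sigmaw_append, ih]

def NoC (w : List Letter) : Prop := Letter.c ∉ w

lemma noC_sigmaw {w} (h : NoC w) : NoC (sigmaw w) := by
  intro hc
  simp only [sigmaw, List.mem_flatMap] at hc
  obtain ⟨x, hx, hc⟩ := hc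
  cases x <;> simp_all [NoC]

lemma len_sigmaw {w} (h : NoC w) : (sigmaw w).length = 2 * w.length := by
  induction w with
  | nil => simp [sigmaw]
  | cons x w ih =>
    have hw : NoC w := fun hc => h (List.mem_cons_of_mem _ hc)
    have hx : x ≠ Letter.c := fun e => h (by simp [e])
    have h2 := ih hw
    cases x
    · have hsig : sigmaw (Letter.a :: w) = Letter.a :: Letter.b :: sigmaw w := by
        simp [sigmaw, List.flatMap_cons]
      rw [hsig]; simp [h2]; omega
    · have hsig : sigmaw (Letter.b :: w) = Letter.a :: Letter.a :: sigmaw w := by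
        simp [sigmaw, List.flatMap_cons]
      rw [hsig]; simp [h2]; omega
    · exact absurd rfl hx

lemma iter_facts (m : ℕ) {w} (h : NoC w) :
    (sigmaw^[m] w).length = 2 ^ m * w.length ∧ NoC (sigmaw^[m] w) := by
  induction m with
  | zero => exact ⟨by simp, by simpa using h⟩
  | succ m ih =>
    rw [Function.iterate_succ_apply']
    exact ⟨by rw [len_sigmaw ih.2, ih.1]; ring, noC_sigmaw ih.2⟩

lemma noC_single {x : Letter} (hx : x ≠ .c) : NoC [x] := by
  intro hc
  exact hx (List.mem_singleton.mp hc).symm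

lemma lt_two_pow_succ (n : ℕ) : n < 2 ^ (n + 1) :=
  lt_of_lt_of_le (Nat.lt_two_pow_self (n := n)) (Nat.pow_le_pow_right (by norm_num) (Nat.le_succ n))

lemma len_iter_single {x : Letter} (hx : x ≠ .c) (m : ℕ) :
    (sigmaw^[m] [x]).length = 2 ^ m := by
  have := (iter_facts m (noC_single hx)).1; simpa using this

lemma noC_A (m : ℕ) : NoC (A m) := (iter_facts m (noC_single (by simp))).2

lemma len_A (m : ℕ) : (A m).length = 2 ^ m := len_iter_single (by simp) m

lemma len_B (m : ℕ) : (B m).length = 2 ^ m := len_iter_single (by simp) m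

lemma A_succ' (m : ℕ) : A (m + 1) = sigmaw (A m) := Function.iterate_succ_apply' _ _ _

lemma B_succ' (m : ℕ) : B (m + 1) = sigmaw (B m) := Function.iterate_succ_apply' _ _ _

lemma A_succ (m : ℕ) : A (m + 1) = A m ++ B m := by
  have : A (m+1) = sigmaw^[m] (sigmaw [.a]) := Function.iterate_succ_apply _ _ _
  rw [this, show sigmaw [.a] = [Letter.a] ++ [Letter.b] from rfl, sigit_append]; rfl

lemma B_succ (m : ℕ) : B (m + 1) = A m ++ A m := by
  have : B (m+1) = sigmaw^[m] (sigmaw [.b]) := Function.iterate_succ_apply _ _ _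
  rw [this, show sigmaw [.b] = [Letter.a] ++ [Letter.a] from rfl, sigit_append]; rfl

lemma getD_A_mono {M M' : ℕ} (h : M ≤ M') {n : ℕ} (hn : n < 2 ^ M) :
    (A M).getD n .a = (A M').getD n .a := by
  induction M', h using Nat.le_induction with
  | base => rfl
  | succ M' hM ih =>
    rw [ih, A_succ, List.getD_append]
    rw [len_A]
    exact lt_of_lt_of_le hn (Nat.pow_le_pow_right (by norm_num) hM)

lemma D_eq (M n : ℕ) (hn : n < 2 ^ M) : D n = (A M).getD n .a := by
  unfold D
  rcases le_total (n + 1) M with h | h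
  · exact getD_A_mono h (lt_two_pow_succ n)
  · exact (getD_A_mono h hn).symm

lemma D_ne_c (n : ℕ) : D n ≠ .c := by
  intro h
  unfold D at h
  rw [List.getD_eq_getElem _ _ (by rw [len_A]; exact lt_two_pow_succ n)] at h
  exact noC_A (n+1) (h ▸ List.getElem_mem _)

lemma sig_getD {w : List Letter} (hw : NoC w) {i : ℕ} (hi : i < w.length) :
    (sigmaw w).getD (2 * i) .a = .a ∧
    (sigmaw w).getD (2 * i + 1) .a = (if w.getD i .a = .a then .b else .a) := by
  induction w generalizing i with
  | nil => simp at hi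
  | cons x w ih =>
    have hw' : NoC w := fun hc => hw (List.mem_cons_of_mem _ hc)
    have hx : x ≠ Letter.c := fun e => hw (by simp [e])
    cases x
    case c => exact absurd rfl hx
    case a =>
      have hsig : sigmaw (Letter.a :: w) = Letter.a :: Letter.b :: sigmaw w := by
        simp [sigmaw, List.flatMap_cons]
      cases i with
      | zero => rw [hsig]; simp
      | succ i =>
        have hi' : i < w.length := by simpa using hi
        obtain ⟨h1, h2⟩ := ih hw' hi'
        refine ⟨?_, ?_⟩
        · rw [hsig, show 2*(i+1) = 2*i+1+1 by ring, List.getD_cons_succ,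
            List.getD_cons_succ]
          exact h1
        · rw [hsig, show 2*(i+1)+1 = (2*i+1)+1+1 by ring, List.getD_cons_succ,
            List.getD_cons_succ, List.getD_cons_succ]
          exact h2
    case b =>
      have hsig : sigmaw (Letter.b :: w) = Letter.a :: Letter.a :: sigmaw w := by
        simp [sigmaw, List.flatMap_cons]
      cases i with
      | zero => rw [hsig]; simp
      | succ i =>
        have hi' : i < w.length := by simpa using hi
        obtain ⟨h1, h2⟩ := ih hw' hi'
        refine ⟨?_, ?_⟩
        · rw [hsig, show 2*(i+1) = 2*i+1+1 by ring, List.getD_cons_succ,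
            List.getD_cons_succ]
          exact h1
        · rw [hsig, show 2*(i+1)+1 = (2*i+1)+1+1 by ring, List.getD_cons_succ,
            List.getD_cons_succ, List.getD_cons_succ]
          exact h2

lemma Dstep (q : ℕ) :
    D (2 * q) = .a ∧ D (2 * q + 1) = (if D q = .a then .b else .a) := by
  have hq : q < 2 ^ q := Nat.lt_two_pow_self
  have h1 : 2 * q < 2 ^ (q + 1) := by rw [pow_succ]; omega
  have h2 : 2 * q + 1 < 2 ^ (q + 1) := by rw [pow_succ]; omega
  have hlen : q < (A q).length := by rw [len_A]; exact hq
  have := sig_getD (noC_A q) hlen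
  rw [D_eq (q+1) _ h1, D_eq (q+1) _ h2, A_succ', D_eq q q hq]
  exact this

lemma sig_single (q : ℕ) : sigmaw [D q] = [D (2 * q), D (2 * q + 1)] := by
  have h := Dstep q
  cases hq : D q
  · rw [h.1, h.2, hq]; rfl
  · rw [h.1, h.2, hq]; rfl
  · exact absurd hq (D_ne_c q)

lemma noBB {q : ℕ} (h : D q = .b) : D (q + 1) = .a := by
  rcases Nat.even_or_odd q with ⟨u, hu⟩ | ⟨u, hu⟩
  · rw [hu, show u + u = 2 * u by ring] at h
    exact absurd ((Dstep u).1.symm.trans h) (by simp)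
  · rw [hu, show 2*u+1+1 = 2*(u+1) by ring]
    exact (Dstep (u+1)).1

lemma block (m : ℕ) : ∀ q r : ℕ, r < 2 ^ m →
    D (2 ^ m * q + r) = (sigmaw^[m] [D q]).getD r .a := by
  induction m with
  | zero =>
    intro q r hr
    interval_cases r
    simp
  | succ m ih =>
    intro q r hr
    have hiter : sigmaw^[m+1] [D q] = sigmaw^[m] [D (2*q)] ++ sigmaw^[m] [D (2*q+1)] := by
      rw [Function.iterate_succ_apply, sig_single,
        show [D (2*q), D (2*q+1)] = [D (2*q)] ++ [D (2*q+1)] from rfl, sigit_append]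
    have hlen : (sigmaw^[m] [D (2*q)]).length = 2 ^ m := len_iter_single (D_ne_c _) m
    rcases lt_or_ge r (2 ^ m) with h | h
    · have : 2 ^ (m+1) * q + r = 2 ^ m * (2 * q) + r := by ring_nf
      rw [this, ih (2*q) r h, hiter, List.getD_append _ _ _ _ (by rw [hlen]; exact h)]
    · have hr' : r - 2 ^ m < 2 ^ m := by
        have : (2:ℕ) ^ (m+1) = 2 ^ m + 2 ^ m := by rw [pow_succ]; ring
        omega
      have : 2 ^ (m+1) * q + r = 2 ^ m * (2 * q + 1) + (r - 2 ^ m) := by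
        have h2 : 2 ^ m + (r - 2 ^ m) = r := Nat.add_sub_cancel' h
        calc 2 ^ (m+1) * q + r = 2 ^ m * (2 * q) + (2 ^ m + (r - 2 ^ m)) := by
              rw [h2, pow_succ]; ring
          _ = 2 ^ m * (2 * q + 1) + (r - 2 ^ m) := by ring
      rw [this, ih (2*q+1) _ hr', hiter,
        List.getD_append_right _ _ _ _ (by rw [hlen]; exact h), hlen]

lemma A_ne_nil (m : ℕ) : A m ≠ [] := by
  apply List.ne_nil_of_length_pos
  rw [len_A]; positivity

lemma B_ne_nil (m : ℕ) : B m ≠ [] := by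
  apply List.ne_nil_of_length_pos
  rw [len_B]; positivity

lemma dropLast_AB : ∀ m, (A m).dropLast = (B m).dropLast := by
  intro m
  induction m with
  | zero => rfl
  | succ m ih =>
    rw [A_succ, B_succ, List.dropLast_append_of_ne_nil (B_ne_nil m),
      List.dropLast_append_of_ne_nil (A_ne_nil m), ih]

lemma lastGet : ∀ m, (A m).getD (2^m - 1) .a = (if m % 2 = 0 then Letter.a else Letter.b)
    ∧ (B m).getD (2^m - 1) .a = (if m % 2 = 0 then Letter.b else Letter.a) := by
  intro m
  induction m with
  | zero => exact ⟨rfl, rfl⟩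
  | succ m ih =>
    have hpos : 0 < (2:ℕ)^m := pow_pos (by norm_num) m
    have hidx : 2^(m+1) - 1 - 2^m = 2^m - 1 := by rw [pow_succ]; omega
    have hge : (A m).length ≤ 2^(m+1) - 1 := by rw [len_A, pow_succ]; omega
    constructor
    · rw [A_succ, List.getD_append_right _ _ _ _ hge, len_A, hidx, ih.2]
      rcases Nat.mod_two_eq_zero_or_one m with h | h
      · have h1 : (m+1) % 2 = 1 := by omega
        simp [h, h1]
      · have h1 : (m+1) % 2 = 0 := by omega
        simp [h, h1]
    · rw [B_succ, List.getD_append_right _ _ _ _ hge, len_A, hidx, ih.1]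
      rcases Nat.mod_two_eq_zero_or_one m with h | h
      · have h1 : (m+1) % 2 = 1 := by omega
        simp [h, h1]
      · have h1 : (m+1) % 2 = 0 := by omega
        simp [h, h1]

lemma len_E1 (m : ℕ) : (E1 m).length = 2^m - 1 := by
  rw [E1, List.length_dropLast, len_A]

lemma getD_dropLast {l : List Letter} {k : ℕ} (h : k + 1 < l.length) :
    l.dropLast.getD k .a = l.getD k .a := by
  rw [List.getD_eq_getElem _ _ (by rw [List.length_dropLast]; omega),
      List.getD_eq_getElem _ _ (by omega), List.getElem_dropLast]

lemma E1_getD {m k : ℕ} (hk : k < 2^m - 1) : (E1 m).getD k .a = (A m).getD k .a := by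
  have hpos : 0 < (2:ℕ)^m := pow_pos (by norm_num) m
  exact getD_dropLast (by rw [len_A]; omega)

lemma AB_getD {m k : ℕ} (hk : k < 2^m - 1) : (A m).getD k .a = (B m).getD k .a := by
  have hpos : 0 < (2:ℕ)^m := pow_pos (by norm_num) m
  rw [← getD_dropLast (l := A m) (by rw [len_A]; omega), dropLast_AB m,
    getD_dropLast (by rw [len_B]; omega)]

lemma E1_succ (m : ℕ) : E1 (m+1) = A m ++ E1 m := by
  rw [E1, A_succ, List.dropLast_append_of_ne_nil (B_ne_nil m), ← dropLast_AB m]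
  rfl

lemma E1_one : E1 1 = [Letter.a] := by decide

lemma DOcc_iff (u : List Letter) (n : ℕ) :
    DOccursAt u (n + 1) ↔ ∀ k, k < u.length → D (n + k) = u.getD k .a := by
  unfold DOccursAt Dseg
  simp only [Nat.add_sub_cancel]
  constructor
  · rintro ⟨-, h⟩ k hk
    have := congrArg (fun l => l.getD k Letter.a) h
    rw [List.getD_eq_getElem _ _ (by simpa using hk)] at this
    rw [List.getElem_map, List.getElem_range] at this
    rw [this, List.getD_eq_getElem _ _ hk]
  · intro h
    refine ⟨Nat.le_add_left 1 n, ?_⟩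
    apply List.ext_getElem (by simp)
    intro j h1 h2
    rw [List.getElem_map, List.getElem_range]
    rw [h j h2, List.getD_eq_getElem _ _ h2]

def Ct (t : ℕ) : Prop := t % 2 = 0 ∨ D (t / 2) = Letter.b

lemma Da_iff_Ct (n : ℕ) : D n = Letter.a ↔ Ct n := by
  rcases Nat.even_or_odd n with ⟨u, hu⟩ | ⟨u, hu⟩
  · have hn : n = 2 * u := by omega
    subst hn
    exact ⟨fun _ => Or.inl (by omega), fun _ => (Dstep u).1⟩
  · have hn : n = 2 * u + 1 := hu
    subst hn
    have hd := (Dstep u).2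
    have hq : (2*u+1) / 2 = u := by omega
    constructor
    · intro ha
      right
      rw [hq]
      cases hDu : D u with
      | a => rw [hDu] at hd; simp at hd; rw [hd] at ha; exact absurd ha (by simp)
      | b => rfl
      | c => exact absurd hDu (D_ne_c u)
    · rintro (h | h)
      · omega
      · rw [hq] at h
        rw [hd, h]
        simp

lemma occ_iff : ∀ m, 1 ≤ m → ∀ n,
    DOccursAt (E1 m) (n + 1) ↔ ∃ t, n = 2 ^ (m - 1) * t ∧ Ct t := by
  intro m hm
  induction m, hm using Nat.le_induction with
  | base =>
    intro n
    rw [E1_one, DOcc_iff]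
    simp only [show (1:ℕ) - 1 = 0 from rfl, pow_zero, one_mul]
    constructor
    · intro h
      have h0 := h 0 (by simp)
      simp only [Nat.add_zero] at h0
      exact ⟨n, rfl, (Da_iff_Ct n).mp (by simpa using h0)⟩
    · rintro ⟨t, rfl, hct⟩
      intro k hk
      simp only [List.length_singleton] at hk
      interval_cases k
      simpa using (Da_iff_Ct n).mpr hct
  | succ m hm ih =>
    intro n
    simp only [Nat.add_sub_cancel]
    have hpos : 0 < (2:ℕ)^m := pow_pos (by norm_num) m
    have hpos' : 0 < (2:ℕ)^(m-1) := pow_pos (by norm_num) (m-1)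
    have hpow : (2:ℕ)^(m+1) = 2^m + 2^m := by rw [pow_succ]; ring
    have hpow2 : (2:ℕ)^(m-1) * 2 = 2^m := by
      rw [← pow_succ]; congr 1; omega
    constructor
    · intro h
      rw [DOcc_iff] at h
      have occ1 : DOccursAt (E1 m) (n + 1) := by
        rw [DOcc_iff]
        intro k hk
        rw [len_E1] at hk
        have hk1 : k < (E1 (m+1)).length := by rw [len_E1]; omega
        have hv := h k hk1
        rw [E1_succ, List.getD_append _ _ _ _ (by rw [len_A]; omega)] at hv
        rw [hv, E1_getD hk]
      have occ2 : DOccursAt (E1 m) (n + 2^m + 1) := by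
        rw [DOcc_iff]
        intro k hk
        rw [len_E1] at hk
        have hk1 : 2^m + k < (E1 (m+1)).length := by rw [len_E1]; omega
        have hv := h (2^m + k) hk1
        rw [E1_succ, List.getD_append_right _ _ _ _ (by rw [len_A]; omega), len_A,
          Nat.add_sub_cancel_left] at hv
        rw [← hv]
        congr 1
        omega
      obtain ⟨t, hn, hct⟩ := (ih n).mp occ1
      obtain ⟨t', hn', hct'⟩ := (ih (n + 2^m)).mp occ2
      have ht' : t' = t + 2 := by
        have heq : 2^(m-1) * (t + 2) = 2^(m-1) * t' := by
          rw [Nat.mul_add, ← hn, hpow2, ← hn']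
        exact (Nat.eq_of_mul_eq_mul_left hpos' heq).symm
      have hteven : t % 2 = 0 := by
        by_contra hodd
        have h1 : D (t / 2) = Letter.b := hct.resolve_left hodd
        have h2 : D (t' / 2) = Letter.b := hct'.resolve_left (by omega)
        rw [ht', show (t+2)/2 = t/2 + 1 by omega] at h2
        rw [noBB h1] at h2
        exact absurd h2 (by simp)
      set s := t / 2 with hs
      have ht2 : t = 2 * s := by omega
      have hns : n = 2^m * s := by
        rw [hn, ht2, show 2^(m-1) * (2*s) = (2^(m-1)*2)*s by ring, hpow2]
      refine ⟨s, hns, ?_⟩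
      by_cases hse : s % 2 = 0
      · exact Or.inl hse
      · right
        set u := s / 2 with hu
        have hsu : s = 2*u + 1 := by omega
        have hk1 : 2^m - 1 < (E1 (m+1)).length := by rw [len_E1]; omega
        have hval := h (2^m - 1) hk1
        rw [E1_succ, List.getD_append _ _ _ _ (by rw [len_A]; omega)] at hval
        have hidx : n + (2^m - 1) = 2^(m+1) * u + (2^(m+1) - 1) := by
          have h3 : 2^m * (2*u+1) = 2^(m+1)*u + 2^m := by rw [pow_succ]; ring
          rw [hns, hsu]
          omega
        rw [hidx, block (m+1) u _ (by omega)] at hval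
        cases hDu : D u with
        | b => rfl
        | a =>
          exfalso
          rw [hDu, show (sigmaw^[m+1] [Letter.a] : List Letter) = A (m+1) from rfl,
            (lastGet (m+1)).1, (lastGet m).1] at hval
          rcases Nat.mod_two_eq_zero_or_one m with hm2 | hm2
          · rw [hm2, show (m+1) % 2 = 1 by omega] at hval
            simp at hval
          · rw [hm2, show (m+1) % 2 = 0 by omega] at hval
            simp at hval
        | c => exact absurd hDu (D_ne_c u)
    · rintro ⟨t, hn, hct⟩
      rw [DOcc_iff]
      intro k hk
      rw [len_E1] at hk
      rcases Nat.even_or_odd t with ⟨q, hq⟩ | ⟨q, hq⟩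
      · have hn' : n = 2^(m+1) * q := by
          rw [hn, show t = 2*q by omega, show 2^m * (2*q) = (2^m*2)*q by ring, ← pow_succ]
        have hD := block (m+1) q k (by omega)
        rw [show n + k = 2^(m+1)*q + k by omega, hD]
        rw [E1_getD (by omega)]
        cases hDq : D q with
        | a => rfl
        | b => exact (AB_getD (by omega)).symm
        | c => exact absurd hDq (D_ne_c q)
      · have hDq : D q = Letter.b := by
          rcases hct with h | h
          · omega
          · rwa [show t/2 = q by omega] at h
        have hDq1 : D (q+1) = Letter.a := noBB hDq
        have hn' : n = 2^(m+1) * q + 2^m := by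
          rw [hn, hq, show 2^m * (2*q+1) = (2^m*2)*q + 2^m by ring, ← pow_succ]
        rcases lt_or_ge k (2^m) with hk2 | hk2
        · have hD := block (m+1) q (2^m + k) (by omega)
          rw [show n + k = 2^(m+1)*q + (2^m + k) by omega, hD, hDq]
          show (B (m+1)).getD (2^m + k) Letter.a = (E1 (m+1)).getD k Letter.a
          rw [B_succ, List.getD_append_right _ _ _ _ (by rw [len_A]; omega), len_A,
            Nat.add_sub_cancel_left, E1_succ,
            List.getD_append _ _ _ _ (by rw [len_A]; omega)]
        · have hD := block (m+1) (q+1) (k - 2^m) (by omega)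
          have hidx : n + k = 2^(m+1)*(q+1) + (k - 2^m) := by
            have h3 : 2^(m+1)*(q+1) = 2^(m+1)*q + 2^(m+1) := by ring
            omega
          rw [hidx, hD, hDq1]
          show (A (m+1)).getD (k - 2^m) Letter.a = (E1 (m+1)).getD k Letter.a
          rw [A_succ, List.getD_append _ _ _ _ (by rw [len_A]; omega),
            E1_succ, List.getD_append_right _ _ _ _ (by rw [len_A]; omega), len_A,
            E1_getD (by omega)]

def nextC (t : ℕ) : ℕ :=
  if t % 2 = 1 then t + 1 else if D (t / 2) = Letter.b then t + 1 else t + 2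

def e : ℕ → ℕ
  | 0 => 0
  | k + 1 => nextC (e k)

lemma nextC_gt (t : ℕ) : t < nextC t := by unfold nextC; split_ifs <;> omega

lemma Ct_e : ∀ k, Ct (e k)
  | 0 => Or.inl rfl
  | (k+1) => by
    have ih := Ct_e k
    show Ct (nextC (e k))
    unfold nextC
    split_ifs with h1 h2
    · exact Or.inl (by omega)
    · right
      rw [show (e k + 1)/2 = e k / 2 by omega]
      exact h2
    · exact Or.inl (by omega)

lemma e_surj : ∀ t, Ct t → ∃ k, e k = t := by
  intro t
  induction t using Nat.strong_induction_on with
  | _ t ih =>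
    intro hct
    rcases Nat.eq_zero_or_pos t with rfl | hpos
    · exact ⟨0, rfl⟩
    rcases Nat.even_or_odd t with ⟨q, hq⟩ | ⟨q, hq⟩
    · have ht : t = 2*q := by omega
      have hq1 : 1 ≤ q := by omega
      by_cases hb : D (q - 1) = Letter.b
      · have hc' : Ct (t-1) := Or.inr (by rw [show (t-1)/2 = q - 1 by omega]; exact hb)
        obtain ⟨k, hk⟩ := ih (t-1) (by omega) hc'
        refine ⟨k+1, ?_⟩
        show nextC (e k) = t
        rw [hk]
        unfold nextC
        rw [if_pos (by omega)]
        omega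
      · have hc' : Ct (t-2) := Or.inl (by omega)
        obtain ⟨k, hk⟩ := ih (t-2) (by omega) hc'
        refine ⟨k+1, ?_⟩
        show nextC (e k) = t
        rw [hk]
        unfold nextC
        rw [if_neg (by omega), if_neg (by rw [show (t-2)/2 = q-1 by omega]; exact hb)]
        omega
    · have hb : D q = Letter.b := by
        rcases hct with h | h
        · omega
        · rwa [show t/2 = q by omega] at h
      have hc' : Ct (t-1) := Or.inl (by omega)
      obtain ⟨k, hk⟩ := ih (t-1) (by omega) hc'
      refine ⟨k+1, ?_⟩
      show nextC (e k) = t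
      rw [hk]
      unfold nextC
      rw [if_neg (by omega), if_pos (by rw [show (t-1)/2 = q by omega]; exact hb)]
      omega

def pref (p : ℕ) : List Letter := (List.range p).map D

def Npref (q : ℕ) : ℕ := (tau1 (pref q)).length

lemma tau1_append (u v : List Letter) : tau1 (u ++ v) = tau1 u ++ tau1 v :=
  List.flatMap_append

lemma pref_succ (p : ℕ) : pref (p+1) = pref p ++ [D p] := by
  rw [pref, List.range_succ, List.map_append]
  rfl

lemma Dseg_one (p : ℕ) : Dseg 1 p = pref p := by
  unfold Dseg pref
  simp

lemma Npref_succ (q : ℕ) : Npref (q+1) = Npref q + (if D q = Letter.b then 2 else 1) := by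
  rw [Npref, pref_succ, tau1_append, List.length_append]
  rw [Npref]
  congr 1
  cases h : D q with
  | a => rfl
  | b => rfl
  | c => exact absurd h (D_ne_c q)

lemma Npref_ge (q : ℕ) : q ≤ Npref q := by
  induction q with
  | zero => simp
  | succ q ih => rw [Npref_succ]; split_ifs <;> omega

lemma Npref_mono {p p' : ℕ} (h : p ≤ p') : Npref p ≤ Npref p' := by
  induction p', h using Nat.le_induction with
  | base => exact le_refl _
  | succ p' h ih => rw [Npref_succ]; split_ifs <;> omega

lemma theta1_stable {p k : ℕ} (hk : k < Npref p) :
    ∀ p', p ≤ p' → (tau1 (pref p')).getD k .a = (tau1 (pref p)).getD k .a := by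
  intro p' hp
  induction p', hp using Nat.le_induction with
  | base => rfl
  | succ p' h ih =>
    rw [pref_succ, tau1_append,
      List.getD_append _ _ _ _ (lt_of_lt_of_le hk (Npref_mono h))]
    exact ih

lemma e_inv : ∀ k, k = Npref (e k / 2) + e k % 2 ∧ (e k % 2 = 1 → D (e k / 2) = Letter.b) := by
  intro k
  induction k with
  | zero => exact ⟨by simp [e, Npref, pref, tau1], by simp [e]⟩
  | succ k ih =>
    obtain ⟨hk, hodd⟩ := ih
    have hsucc : e (k+1) = nextC (e k) := rfl
    rcases Nat.mod_two_eq_zero_or_one (e k) with hp | hp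
    · by_cases hb : D (e k / 2) = Letter.b
      · have hnext : e (k+1) = e k + 1 := by
          rw [hsucc]; unfold nextC; rw [if_neg (by omega), if_pos hb]
        constructor
        · rw [hnext, show (e k + 1)/2 = e k/2 by omega, show (e k + 1)%2 = 1 by omega]
          omega
        · intro _
          rw [hnext, show (e k + 1)/2 = e k/2 by omega]
          exact hb
      · have hnext : e (k+1) = e k + 2 := by
          rw [hsucc]; unfold nextC; rw [if_neg (by omega), if_neg hb]
        constructor
        · rw [hnext, show (e k + 2)/2 = e k/2 + 1 by omega,
            show (e k + 2)%2 = 0 by omega, Npref_succ, if_neg hb]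
          omega
        · intro hcon
          rw [hnext] at hcon
          omega
    · have hb := hodd hp
      have hnext : e (k+1) = e k + 1 := by
        rw [hsucc]; unfold nextC; rw [if_pos hp]
      constructor
      · rw [hnext, show (e k + 1)/2 = e k/2 + 1 by omega,
          show (e k + 1)%2 = 0 by omega, Npref_succ, if_pos hb]
        omega
      · intro hcon
        rw [hnext] at hcon
        omega

lemma theta1_e (k : ℕ) : Theta1 (k+1) = D (e k / 2) := by
  obtain ⟨hk, hodd⟩ := e_inv k
  have hDqc : D (e k / 2) ≠ Letter.c := D_ne_c _
  have hlt : k < Npref (e k / 2 + 1) := by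
    rw [Npref_succ]
    by_cases hb : D (e k / 2) = Letter.b
    · rw [if_pos hb]; omega
    · rw [if_neg hb]
      have hs0 : e k % 2 = 0 := by
        rcases Nat.mod_two_eq_zero_or_one (e k) with h | h
        · exact h
        · exact absurd (hodd h) hb
      omega
  have hple : e k / 2 + 1 ≤ k + 1 := by have := Npref_ge (e k / 2); omega
  unfold Theta1
  rw [Dseg_one, Nat.add_sub_cancel,
    theta1_stable hlt (k+1) hple, pref_succ, tau1_append,
    List.getD_append_right _ _ _ _ (show (tau1 (pref (e k / 2))).length ≤ k by
      show Npref _ ≤ k; omega)]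
  have hidx : k - (tau1 (pref (e k / 2))).length = e k % 2 := by
    show k - Npref _ = _
    omega
  rw [hidx]
  cases hb : D (e k / 2) with
  | a =>
    have hs0 : e k % 2 = 0 := by
      rcases Nat.mod_two_eq_zero_or_one (e k) with h | h
      · exact h
      · rw [hodd h] at hb; exact absurd hb (by simp)
    rw [hs0]
    rfl
  | b =>
    rcases Nat.mod_two_eq_zero_or_one (e k) with h | h <;> rw [h] <;> rfl
  | c => exact absurd hb hDqc

lemma SMuniq {f g : ℕ → ℕ} (hf : StrictMono f) (hg : StrictMono g)
    (h : Set.range f = Set.range g) : ∀ k, f k = g k := by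
  intro k
  induction k using Nat.strong_induction_on with
  | _ k ih =>
    obtain ⟨i, hi⟩ : f k ∈ Set.range g := h ▸ Set.mem_range_self k
    obtain ⟨j, hj⟩ : g k ∈ Set.range f := h.symm ▸ Set.mem_range_self k
    have h1 : k ≤ i := by
      by_contra hcon
      push_neg at hcon
      rw [← ih i hcon] at hi
      have := hf.injective hi
      omega
    have h2 : k ≤ j := by
      by_contra hcon
      push_neg at hcon
      rw [ih j hcon] at hj
      have := hg.injective hj
      omega
    have h3 : g k ≤ g i := hg.monotone h1
    have h4 : f k ≤ f j := hf.monotone h2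
    omega

lemma Dseg_block (M q : ℕ) : Dseg (1 + 2^M * q) (2^M) = sigmaw^[M] [D q] := by
  apply List.ext_getElem
  · simp [Dseg, len_iter_single (D_ne_c q)]
  · intro j h1 h2
    simp only [Dseg, List.getElem_map, List.getElem_range]
    rw [show 1 + 2^M*q - 1 + j = 2^M * q + j from by omega]
    rw [block M q j (by rw [len_iter_single (D_ne_c q)] at h2; exact h2)]
    exact List.getD_eq_getElem _ _ h2

lemma nth_eq (m : ℕ) (hm : 1 ≤ m) (k : ℕ) :
    Nat.nth (DOccursAt (E1 m)) k = 1 + 2^(m-1) * e k := by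
  have hpos : 0 < (2:ℕ)^(m-1) := pow_pos (by norm_num) _
  set f : ℕ → ℕ := fun k => 1 + 2^(m-1) * e k with hf
  have hfmono : StrictMono f := by
    apply strictMono_nat_of_lt_succ
    intro j
    have h2 : e j < e (j+1) := nextC_gt (e j)
    have h3 : 2^(m-1) * e j < 2^(m-1) * e (j+1) := mul_lt_mul_of_pos_left h2 hpos
    simp only [hf]
    omega
  have hrange : Set.range f = setOf (DOccursAt (E1 m)) := by
    ext i
    constructor
    · rintro ⟨j, rfl⟩
      show DOccursAt (E1 m) (f j)
      rw [show f j = 2^(m-1) * e j + 1 from by simp only [hf]; omega]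
      exact (occ_iff m hm _).mpr ⟨e j, rfl, Ct_e j⟩
    · intro hi
      have h1 : 1 ≤ i := hi.1
      obtain ⟨n, rfl⟩ : ∃ n, i = n + 1 := ⟨i - 1, by omega⟩
      obtain ⟨t, ht, hct⟩ := (occ_iff m hm n).mp hi
      obtain ⟨j, hj⟩ := e_surj t hct
      exact ⟨j, by simp only [hf, hj]; omega⟩
  have hinf : (setOf (DOccursAt (E1 m))).Infinite := by
    rw [← hrange]
    exact Set.infinite_range_of_injective hfmono.injective
  exact SMuniq (Nat.nth_strictMono hinf) hfmono
    (by rw [Nat.range_nth_of_infinite hinf, hrange]; rfl) k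

lemma pow_sub_one_mul_two (m : ℕ) (hm : 1 ≤ m) : (2:ℕ)^(m-1) * 2 = 2^m := by
  rw [← pow_succ]
  congr 1
  omega

/-- For every m ≥ 1 and p ≥ 1, the p-th return word of E_{1,m} in D is
A_m if Θ₁[p] = a and A_{m−1} if Θ₁[p] = b, i.e. {r_p(E_{1,m})}_{p≥1} is Θ₁ over
the alphabet {A_m, A_{m−1}}. -/
theorem return_words_of_E1 (m : ℕ) (hm : 1 ≤ m) (p : ℕ) (hp : 1 ≤ p) :
    (Theta1 p = .a → r (E1 m) p = A m) ∧
    (Theta1 p = .b → r (E1 m) p = A (m - 1)) := by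

  obtain ⟨k, rfl⟩ : ∃ k, p = k + 1 := ⟨p - 1, by omega⟩
  have hpos : 0 < (2:ℕ)^(m-1) := pow_pos (by norm_num) _
  have hL1 : L (E1 m) (k+1) = 1 + 2^(m-1) * e k := by
    rw [L, Nat.add_sub_cancel, nth_eq m hm k]
  have hL2 : L (E1 m) (k+1+1) = 1 + 2^(m-1) * e (k+1) := by
    rw [L, Nat.add_sub_cancel, nth_eq m hm (k+1)]
  have hmono : e k < e (k+1) := nextC_gt (e k)
  have hr : r (E1 m) (k+1) = Dseg (1 + 2^(m-1) * e k) (2^(m-1) * (e (k+1) - e k)) := by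
    rw [r, if_neg (by omega), hL1, hL2, Nat.mul_sub]
    congr 1
    omega
  have hth : Theta1 (k+1) = D (e k / 2) := theta1_e k
  obtain ⟨hinv, hodd⟩ := e_inv k
  constructor
  · intro ha
    rw [hth] at ha
    have hs0 : e k % 2 = 0 := by
      rcases Nat.mod_two_eq_zero_or_one (e k) with h | h
      · exact h
      · rw [hodd h] at ha; exact absurd ha (by simp)
    have hnext : e (k+1) = e k + 2 := by
      show nextC (e k) = _
      unfold nextC
      rw [if_neg (by omega), if_neg (by rw [ha]; simp)]
    obtain ⟨q, hq⟩ : ∃ q, e k = 2 * q := ⟨e k / 2, by omega⟩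
    have hq2 : e k / 2 = q := by omega
    rw [hq2] at ha
    have he : 2^(m-1) * e k = 2^m * q := by
      rw [hq, show 2^(m-1) * (2*q) = (2^(m-1)*2)*q from by ring,
        pow_sub_one_mul_two m hm]
    rw [hr, hnext, show e k + 2 - e k = 2 from by omega,
      pow_sub_one_mul_two m hm, he, Dseg_block m q, ha]
    rfl
  · intro hb
    rw [hth] at hb
    have hnext : e (k+1) = e k + 1 := by
      show nextC (e k) = _
      unfold nextC
      rcases Nat.mod_two_eq_zero_or_one (e k) with h | h
      · rw [if_neg (by omega), if_pos hb]
      · rw [if_pos h]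
    have hDt : D (e k) = Letter.a := by
      rcases Nat.mod_two_eq_zero_or_one (e k) with h | h
      · rw [show e k = 2 * (e k / 2) from by omega]
        exact (Dstep _).1
      · set q := e k / 2 with hqdef
        rw [show e k = 2 * q + 1 from by omega, (Dstep q).2, hb]
        simp
    rw [hr, hnext, show e k + 1 - e k = 1 from by omega, mul_one,
      Dseg_block (m-1) (e k), hDt]
    rfl
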